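/- For any string S of length n ≥ 2, the sum of φ_S(w) over all distinct nonempty strings w with occ_S(w) ≥ 2 is at most 2n − 2. -/

import Mathlib

set_option linter.unusedSectionVars false
set_option maxHeartbeats 1000000

variable {Γ : Type*} [DecidableEq Γ]

/-- `occ S w` is the number of occurrences of `w` as a contiguous substring of `S`,
i.e., the number of (0-based) indices `i` with `S[i..i+|w|-1] = w`. -/
def occ (S w : List Γ) : ℕ :=
  ((List.range S.length).filter fun i => (S.drop i).take w.length = w).length

/-- `Phi S w` is the set of pairs `(α, β)` of characters such that
`occ S (αwβ) = occ S (αw) = occ S (wβ) = 1`. -/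
def Phi (S w : List Γ) : Set (Γ × Γ) :=
  {p | occ S (p.1 :: (w ++ [p.2])) = 1 ∧ occ S (p.1 :: w) = 1 ∧ occ S (w ++ [p.2]) = 1}

/-- The net frequency of `w` in `S`. -/
noncomputable def phi (S w : List Γ) : ℕ := (Phi S w).ncard

/-- The "match" predicate: `u` occurs in `S` at position `i`. -/
def Mtc (S u : List Γ) (i : ℕ) : Prop := (S.drop i).take u.length = u

lemma mtc_length {S u : List Γ} {i : ℕ} (hu : u ≠ []) (h : Mtc S u i) :
    i + u.length ≤ S.length := by
  have hl := congrArg List.length h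
  rw [List.length_take, List.length_drop] at hl
  have : 0 < u.length := List.length_pos_iff.mpr hu
  omega

lemma mem_occ_filter {S u : List Γ} {i : ℕ} (hu : u ≠ []) (h : Mtc S u i) :
    i ∈ (List.range S.length).filter fun j => (S.drop j).take u.length = u := by
  have h1 := mtc_length hu h
  have : 0 < u.length := List.length_pos_iff.mpr hu
  simp only [List.mem_filter, List.mem_range, decide_eq_true_eq]
  exact ⟨by omega, h⟩

lemma mtc_of_mem {S u : List Γ} {i : ℕ}
    (h : i ∈ (List.range S.length).filter fun j => (S.drop j).take u.length = u) :
    Mtc S u i := by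
  simp only [List.mem_filter, decide_eq_true_eq] at h
  exact h.2

lemma exists_mtc_of_occ_pos {S u : List Γ} (h : 0 < occ S u) : ∃ i, Mtc S u i := by
  rw [occ] at h
  obtain ⟨i, hi⟩ := List.exists_mem_of_ne_nil _ (List.length_pos_iff.mp h)
  exact ⟨i, mtc_of_mem hi⟩

lemma mtc_unique {S u : List Γ} (h1 : occ S u = 1) (hu : u ≠ []) {i j : ℕ}
    (hi : Mtc S u i) (hj : Mtc S u j) : i = j := by
  rw [occ] at h1
  obtain ⟨a, ha⟩ := List.length_eq_one_iff.mp h1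
  have hi' := mem_occ_filter hu hi
  have hj' := mem_occ_filter hu hj
  rw [ha, List.mem_singleton] at hi' hj'
  omega

lemma two_le_occ {S u : List Γ} (hu : u ≠ []) {i j : ℕ} (hij : i ≠ j)
    (hi : Mtc S u i) (hj : Mtc S u j) : 2 ≤ occ S u := by
  have hsub : [i, j] ⊆ (List.range S.length).filter fun k => (S.drop k).take u.length = u := by
    intro x hx
    simp only [List.mem_cons, List.not_mem_nil, or_false] at hx
    rcases hx with rfl | rfl
    · exact mem_occ_filter hu hi
    · exact mem_occ_filter hu hj
  have hnd : ([i, j] : List ℕ).Nodup := by simp [hij]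
  have := (hnd.subperm hsub).length_le
  simpa [occ] using this

lemma occ_two {S u : List Γ} (h : 2 ≤ occ S u) :
    ∃ i j, i ≠ j ∧ Mtc S u i ∧ Mtc S u j := by
  rw [occ] at h
  have hnd : ((List.range S.length).filter fun k => (S.drop k).take u.length = u).Nodup :=
    List.nodup_range.filter _
  rcases hL : (List.range S.length).filter fun k => (S.drop k).take u.length = u with
    _ | ⟨a, _ | ⟨b, t⟩⟩
  · rw [hL] at h; simp at h
  · rw [hL] at h; simp at h
  · rw [hL] at hnd
    have hab : a ≠ b := by
      simp only [List.nodup_cons, List.mem_cons] at hnd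
      tauto
    refine ⟨a, b, hab, mtc_of_mem ?_, mtc_of_mem ?_⟩ <;> rw [hL] <;> simp

lemma mtc_drop {S u : List Γ} {i : ℕ} (h : Mtc S u i) (k : ℕ) :
    Mtc S (u.drop k) (i + k) := by
  have h2 := congrArg (List.drop k) h
  rw [List.drop_take, List.drop_drop] at h2
  rw [Mtc, List.length_drop]
  exact h2

lemma mtc_take {S u : List Γ} {i : ℕ} (h : Mtc S u i) (k : ℕ) :
    Mtc S (u.take k) i := by
  have h2 := congrArg (List.take k) h
  rw [List.take_take] at h2
  rw [Mtc, List.length_take]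
  exact h2

lemma mtc_getElem {S u : List Γ} {i : ℕ} (h : Mtc S u i) {m : ℕ} (hm : m < u.length) :
    S[i + m]? = u[m]? := by
  conv_rhs => rw [← h]
  rw [List.getElem?_take, if_pos hm, List.getElem?_drop]

lemma mem_of_getElem?' {l : List Γ} {n : ℕ} {a : Γ} (h : l[n]? = some a) : a ∈ l := by
  obtain ⟨h1, h2⟩ := List.getElem?_eq_some_iff.mp h
  exact h2 ▸ List.getElem_mem h1

/-- the unique position of `u` in `S` (meaningful when `occ S u = 1`). -/
def posn (S u : List Γ) : ℕ :=
  ((List.range S.length).filter fun i => (S.drop i).take u.length = u).headI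

lemma posn_mtc {S u : List Γ} (h : occ S u = 1) : Mtc S u (posn S u) := by
  rw [occ] at h
  obtain ⟨a, ha⟩ := List.length_eq_one_iff.mp h
  have hpa : posn S u = a := by rw [posn, ha]; rfl
  rw [hpa]
  apply mtc_of_mem (u := u)
  rw [ha]; simp

lemma mtc_eq {S u v : List Γ} {i : ℕ} (hu : Mtc S u i) (hv : Mtc S v i)
    (h : u.length = v.length) : u = v := by
  rw [Mtc] at hu hv
  rw [← hu, ← hv, h]

/-- If `αwβ` occurs exactly once and `wβ` occurs exactly once, then `αw` matches at
`posn S (wβ) - 1`. -/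
lemma left_ext {S w : List Γ} {α β : Γ} (h1 : occ S (α :: (w ++ [β])) = 1)
    (h3 : occ S (w ++ [β]) = 1) :
    ∃ r, Mtc S (α :: w) r ∧ r + 1 = posn S (w ++ [β]) := by
  obtain ⟨r, hr⟩ := exists_mtc_of_occ_pos (show 0 < occ S (α :: (w ++ [β])) by omega)
  refine ⟨r, ?_, ?_⟩
  · have ht := mtc_take hr (w.length + 1)
    have he : (α :: (w ++ [β])).take (w.length + 1) = α :: w := by
      have : α :: (w ++ [β]) = (α :: w) ++ [β] := by simp
      rw [this, show w.length + 1 = (α :: w).length by simp, List.take_left]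
    rwa [he] at ht
  · have hd := mtc_drop hr 1
    simp only [List.drop_one, List.tail_cons] at hd
    exact mtc_unique h3 (by simp) hd (posn_mtc h3)

/-- Key injectivity lemma: two triples mapping to the same position, with
`|w| < |w'|`, yield a contradiction. -/
lemma key {S w w' : List Γ} {α β β' : Γ}
    (hocc' : 2 ≤ occ S w')
    (h1 : occ S (α :: (w ++ [β])) = 1) (h2 : occ S (α :: w) = 1)
    (h3 : occ S (w ++ [β]) = 1) (h3' : occ S (w' ++ [β']) = 1)
    (hp : posn S (w ++ [β]) + w.length = posn S (w' ++ [β']) + w'.length)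
    (hlt : w.length < w'.length) : False := by
  obtain ⟨r, hrw, hri⟩ := left_ext h1 h3
  set i := posn S (w ++ [β]) with hi_def
  set i' := posn S (w' ++ [β']) with hi'_def
  set k := w'.length - w.length - 1 with hk
  have hklen : w'.length = w.length + 1 + k := by omega
  have hr_eq : r = i' + k := by omega
  have hw'm : Mtc S w' i' := by
    have := mtc_take (posn_mtc h3') w'.length
    rwa [show (w' ++ [β']).take w'.length = w' from List.take_left] at this
  rw [hr_eq] at hrw
  have heq : w'.drop k = α :: w := by
    refine mtc_eq (mtc_drop hw'm k) hrw ?_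
    simp only [List.length_drop, List.length_cons]
    omega
  obtain ⟨j1, j2, hj12, hj1, hj2⟩ := occ_two hocc'
  have m1 : Mtc S (α :: w) (j1 + k) := heq ▸ mtc_drop hj1 k
  have m2 : Mtc S (α :: w) (j2 + k) := heq ▸ mtc_drop hj2 k
  have := two_le_occ (by simp) (show j1 + k ≠ j2 + k by omega) m1 m2
  omega

/-- Equal-length case: the triples coincide. -/
lemma key_eq {S w w' : List Γ} {α β α' β' : Γ}
    (h1 : occ S (α :: (w ++ [β])) = 1) (h3 : occ S (w ++ [β]) = 1)
    (h1' : occ S (α' :: (w' ++ [β'])) = 1) (h3' : occ S (w' ++ [β']) = 1)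
    (hp : posn S (w ++ [β]) + w.length = posn S (w' ++ [β']) + w'.length)
    (hlen : w.length = w'.length) : w = w' ∧ α = α' ∧ β = β' := by
  have hii : posn S (w ++ [β]) = posn S (w' ++ [β']) := by omega
  have hwb : w ++ [β] = w' ++ [β'] := by
    refine mtc_eq (posn_mtc h3) (hii ▸ posn_mtc h3') (by simp [hlen])
  obtain ⟨hw, hb⟩ := List.append_inj' hwb (by simp)
  have hbb : β = β' := by simpa using hb
  obtain ⟨r, hrw, hri⟩ := left_ext h1 h3
  obtain ⟨r', hrw', hri'⟩ := left_ext h1' h3'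
  have hrr : r = r' := by omega
  rw [hrr] at hrw
  have : α :: w = α' :: w' := mtc_eq hrw hrw' (by simp [hlen])
  exact ⟨hw, by simpa [hw] using this, hbb⟩

/-- The Finset version of `Phi`. -/
def phiF (S w : List Γ) : Finset (Γ × Γ) :=
  (S.toFinset ×ˢ S.toFinset).filter fun p =>
    occ S (p.1 :: (w ++ [p.2])) = 1 ∧ occ S (p.1 :: w) = 1 ∧ occ S (w ++ [p.2]) = 1

lemma Phi_eq (S w : List Γ) : Phi S w = ↑(phiF S w) := by
  ext ⟨α, β⟩
  simp only [Phi, Set.mem_setOf_eq, phiF, Finset.coe_filter, Finset.mem_product,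
    List.mem_toFinset, Finset.mem_coe, Finset.mem_filter, Finset.mem_product]
  constructor
  · rintro ⟨h1, h2, h3⟩
    refine ⟨⟨?_, ?_⟩, h1, h2, h3⟩
    · obtain ⟨i, hi⟩ := exists_mtc_of_occ_pos (show 0 < occ S (α :: w) by omega)
      have hg := mtc_getElem hi (m := 0) (by simp)
      simp only [Nat.add_zero, List.getElem?_cons_zero] at hg
      exact mem_of_getElem?' hg
    · obtain ⟨i, hi⟩ := exists_mtc_of_occ_pos (show 0 < occ S (w ++ [β]) by omega)
      have hg := mtc_getElem hi (m := w.length) (by simp)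
      rw [List.getElem?_concat_length] at hg
      exact mem_of_getElem?' hg
  · tauto

/-- For a string `S` of length `n ≥ 2`, the sum of net frequencies over
all distinct nonempty repeats of `S` is at most `2n - 2`. -/
theorem stmt5 (S : List Γ) (hn : 2 ≤ S.length) :
    ∑ᶠ w ∈ {w : List Γ | w ≠ [] ∧ 2 ≤ occ S w}, phi S w ≤ 2 * S.length - 2 := by
  classical
  set n := S.length with hn_def
  set finT : Finset (List Γ) :=
    ((Finset.range n ×ˢ Finset.range n).image fun p => (S.drop p.1).take (p.2 + 1)).filter
      (fun w => w ≠ [] ∧ 2 ≤ occ S w) with hfinT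
  have hT : {w : List Γ | w ≠ [] ∧ 2 ≤ occ S w} = ↑finT := by
    ext w
    simp only [Set.mem_setOf_eq, hfinT, Finset.coe_filter, Set.mem_setOf_eq,
      Finset.mem_image, Finset.mem_product, Finset.mem_range]
    constructor
    · rintro ⟨hw, hocc⟩
      obtain ⟨i, hi⟩ := exists_mtc_of_occ_pos (show 0 < occ S w by omega)
      have hlen := mtc_length hw hi
      have hwpos : 0 < w.length := List.length_pos_iff.mpr hw
      refine ⟨⟨(i, w.length - 1), ⟨by omega, by omega⟩, ?_⟩, hw, hocc⟩
      show (S.drop i).take (w.length - 1 + 1) = w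
      rw [show w.length - 1 + 1 = w.length by omega]
      exact hi
    · tauto
  rw [hT, finsum_mem_coe_finset]
  have hsum : ∑ w ∈ finT, phi S w = (finT.sigma fun w => phiF S w).card := by
    rw [Finset.card_sigma]
    refine Finset.sum_congr rfl fun w _ => ?_
    unfold phi
    rw [Phi_eq, Set.ncard_coe_finset]
  rw [hsum]
  have hcard : (finT.sigma fun w => phiF S w).card ≤ (Finset.range n).card := by
    apply Finset.card_le_card_of_injOn (fun x => posn S (x.1 ++ [x.2.2]) + x.1.length)
    · rintro ⟨w, α, β⟩ hx
      rw [Finset.mem_coe, Finset.mem_sigma] at hx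
      obtain ⟨hwT, hpF⟩ := hx
      rw [hfinT, Finset.mem_filter] at hwT
      obtain ⟨-, hw, hocc⟩ := hwT
      rw [phiF, Finset.mem_filter] at hpF
      obtain ⟨-, h1, h2, h3⟩ := hpF
      have hml := mtc_length (by simp) (posn_mtc h3)
      simp only [List.length_append, List.length_cons, List.length_nil] at hml
      rw [Finset.mem_coe, Finset.mem_range]
      show posn S (w ++ [β]) + w.length < n
      omega
    · rintro ⟨w, α, β⟩ hx ⟨w', α', β'⟩ hy hF
      rw [Finset.mem_coe, Finset.mem_sigma] at hx hy
      obtain ⟨hwT, hpF⟩ := hx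
      obtain ⟨hwT', hpF'⟩ := hy
      rw [hfinT, Finset.mem_filter] at hwT hwT'
      obtain ⟨-, hw, hocc⟩ := hwT
      obtain ⟨-, hw', hocc'⟩ := hwT'
      rw [phiF, Finset.mem_filter] at hpF hpF'
      obtain ⟨-, h1, h2, h3⟩ := hpF
      obtain ⟨-, h1', h2', h3'⟩ := hpF'
      simp only at hF
      rcases lt_trichotomy w.length w'.length with hl | hl | hl
      · exact (key hocc' h1 h2 h3 h3' hF hl).elim
      · obtain ⟨hww, haa, hbb⟩ := key_eq h1 h3 h1' h3' hF hl
        subst hww; subst haa; subst hbb; rfl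
      · exact (key hocc h1' h2' h3' h3 hF.symm hl).elim
  rw [Finset.card_range] at hcard
  omega
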